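/- The subsequence (scattered subword) relation on words over a finite alphabet is a well-quasi-order: it is reflexive, transitive, and every infinite sequence of words contains an increasing pair. -/

import Mathlib

/-- The subsequence (scattered subword) relation on words over a finite alphabet is a
well-quasi-order: it is reflexive, transitive, and every infinite sequence of words
contains an increasing pair. -/
theorem subsequence_wqo (A : Type) [Fintype A] :
    (∀ u : List A, u.Sublist u) ∧
    (∀ u v w : List A, u.Sublist v → v.Sublist w → u.Sublist w) ∧
    (∀ f : ℕ → List A, ∃ i j : ℕ, i < j ∧ (f i).Sublist (f j)) := by
  refine ⟨fun u => List.Sublist.refl u, fun u v w h1 h2 => h1.trans h2, fun f => ?_⟩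
  have hs : (Set.univ : Set A).PartiallyWellOrderedOn (· = ·) :=
    Set.finite_univ.partiallyWellOrderedOn
  have h := (hs.partiallyWellOrderedOn_sublistForall₂ (· = ·)) (fun n => ⟨f n, fun x _ => trivial⟩)
  obtain ⟨i, j, hij, h⟩ := h
  change List.SublistForall₂ (· = ·) (f i) (f j) at h
  refine ⟨i, j, hij, ?_⟩
  obtain ⟨l, hl, hsub⟩ := List.sublistForall₂_iff.1 h
  have : f i = l := congrFun (congrFun List.forall₂_eq_eq_eq (f i)) l ▸ hl
  rwa [this]
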